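/- arXiv:2008.00233 — 2 statements merged into one kernel-verified Lean document; each statement's English description precedes it below -/
import Mathlib

section
/- Let a < b, α ∈ (0,1), and let m : ℝ → ℝ be continuous on [a,b]. Then the left Riemann–Liouville fractional derivative is a left inverse of the left Riemann–Liouville fractional integral of the same order: for every t ∈ (a,b), (D_{a+}^α (I_{a+}^α m))(t) = m(t). (This is the identity D_{a+}^α [^s I_{a+}^α X](t) = E[X(t)] for a second-order stochastic process X with continuous expectation function m = E∘X.) -/
open MeasureTheory Set intervalIntegral

/-- Left Riemann–Liouville fractional integral of order `α` with base point `a`: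
`(I_{a+}^α f)(t) = (1/Γ(α)) ∫_a^t (t-τ)^(α-1) f(τ) dτ`. -/
noncomputable def RLIl (a α : ℝ) (f : ℝ → ℝ) (t : ℝ) : ℝ :=
  (1 / Real.Gamma α) * ∫ τ in a..t, (t - τ) ^ (α - 1) * f τ

/-- Right Riemann–Liouville fractional integral of order `α` with base point `b`:
`(I_{b-}^α f)(t) = (1/Γ(α)) ∫_t^b (τ-t)^(α-1) f(τ) dτ`. -/
noncomputable def RLIr (b α : ℝ) (f : ℝ → ℝ) (t : ℝ) : ℝ :=
  (1 / Real.Gamma α) * ∫ τ in t..b, (τ - t) ^ (α - 1) * f τ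

/-- Left Riemann–Liouville fractional derivative of order `α ∈ (0,1)`:
`(D_{a+}^α f)(t) = d/dt (I_{a+}^{1-α} f)(t)`. -/
noncomputable def RLDl (a α : ℝ) (f : ℝ → ℝ) (t : ℝ) : ℝ :=
  deriv (RLIl a (1 - α) f) t

/-- Right Riemann–Liouville fractional derivative of order `α ∈ (0,1)`:
`(D_{b-}^α f)(t) = -d/dt (I_{b-}^{1-α} f)(t)`. -/
noncomputable def RLDr (b α : ℝ) (f : ℝ → ℝ) (t : ℝ) : ℝ :=
  - deriv (RLIr b (1 - α) f) t

/-- Left Caputo fractional derivative of order `α ∈ (0,1)`: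
`(^C D_{a+}^α f)(t) = (1/Γ(1-α)) ∫_a^t (t-τ)^(-α) f'(τ) dτ`. -/
noncomputable def CapDl (a α : ℝ) (f : ℝ → ℝ) (t : ℝ) : ℝ :=
  (1 / Real.Gamma (1 - α)) * ∫ τ in a..t, (t - τ) ^ (-α) * deriv f τ

/-- Right Caputo fractional derivative of order `α ∈ (0,1)`:
`(^C D_{b-}^α f)(t) = -(1/Γ(1-α)) ∫_t^b (τ-t)^(-α) f'(τ) dτ`. -/
noncomputable def CapDr (b α : ℝ) (f : ℝ → ℝ) (t : ℝ) : ℝ :=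
  -(1 / Real.Gamma (1 - α)) * ∫ τ in t..b, (τ - t) ^ (-α) * deriv f τ

lemma real_beta {α : ℝ} (hα : α ∈ Set.Ioo (0:ℝ) 1) :
    ∫ u in (0:ℝ)..1, u ^ (α - 1) * (1 - u) ^ (-α) = Real.Gamma α * Real.Gamma (1 - α) := by
  obtain ⟨h0, h1⟩ := hα
  have hc := Complex.Gamma_mul_Gamma_eq_betaIntegral (s := (α:ℂ)) (t := ((1 - α : ℝ) : ℂ))
    (by simpa using h0) (by simpa using (by linarith : (0:ℝ) < 1 - α))
  have hsum : (α : ℂ) + ((1 - α : ℝ) : ℂ) = 1 := by push_cast; ring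
  rw [hsum, Complex.Gamma_one, one_mul] at hc
  have key : Complex.betaIntegral (α:ℂ) ((1 - α : ℝ):ℂ)
      = ((∫ u in (0:ℝ)..1, u ^ (α - 1) * (1 - u) ^ (-α) : ℝ) : ℂ) := by
    rw [Complex.betaIntegral, ← intervalIntegral.integral_ofReal]
    apply intervalIntegral.integral_congr
    intro x hx
    rw [Set.uIcc_of_le (by norm_num : (0:ℝ) ≤ 1)] at hx
    have hx0 : (0:ℝ) ≤ x := hx.1
    have hx1 : (0:ℝ) ≤ 1 - x := by linarith [hx.2]
    have e1 : ((α:ℂ) - 1) = ((α - 1 : ℝ) : ℂ) := by push_cast; ring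
    have e2 : (((1 - α : ℝ):ℂ) - 1) = ((-α : ℝ) : ℂ) := by push_cast; ring
    have e3 : ((1:ℂ) - (x:ℂ)) = ((1 - x : ℝ) : ℂ) := by push_cast; ring
    simp only [e1, e2, e3]
    rw [← Complex.ofReal_cpow hx0, ← Complex.ofReal_cpow hx1]
    push_cast
    ring
  rw [key] at hc
  have : ((Real.Gamma α * Real.Gamma (1 - α) : ℝ) : ℂ)
      = ((∫ u in (0:ℝ)..1, u ^ (α - 1) * (1 - u) ^ (-α) : ℝ) : ℂ) := by
    rw [← hc, Complex.ofReal_mul, Complex.Gamma_ofReal, Complex.Gamma_ofReal]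
  exact_mod_cast this.symm

lemma beta_sub {α σ s : ℝ} (hα : α ∈ Set.Ioo (0:ℝ) 1) (h : σ < s) :
    ∫ τ in σ..s, (s - τ) ^ (-α) * (τ - σ) ^ (α - 1)
      = Real.Gamma α * Real.Gamma (1 - α) := by
  set c := s - σ with hc
  have hc0 : 0 < c := by simp [hc]; linarith
  have key := intervalIntegral.integral_comp_mul_add
    (a := (0:ℝ)) (b := 1) (fun x => (s - x) ^ (-α) * (x - σ) ^ (α - 1)) hc0.ne' σ
  simp only [mul_zero, zero_add, mul_one, hc] at key
  rw [sub_add_cancel] at key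
  -- key : ∫ u in 0..1, f ((s-σ)*u + σ) = (s-σ)⁻¹ • ∫ x in σ..s, f x
  have congr1 : ∫ u in (0:ℝ)..1, (s - ((s - σ) * u + σ)) ^ (-α) * (((s - σ) * u + σ) - σ) ^ (α - 1)
      = ∫ u in (0:ℝ)..1, c⁻¹ * (u ^ (α - 1) * (1 - u) ^ (-α)) := by
    apply intervalIntegral.integral_congr
    intro u hu
    rw [Set.uIcc_of_le (by norm_num : (0:ℝ) ≤ 1)] at hu
    have hu0 : 0 ≤ u := hu.1
    have hu1 : 0 ≤ 1 - u := by linarith [hu.2]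
    have e1 : s - ((s - σ) * u + σ) = c * (1 - u) := by rw [hc]; ring
    have e2 : ((s - σ) * u + σ) - σ = c * u := by rw [hc]; ring
    show (s - ((s - σ) * u + σ)) ^ (-α) * (((s - σ) * u + σ) - σ) ^ (α - 1)
      = c⁻¹ * (u ^ (α - 1) * (1 - u) ^ (-α))
    rw [e1, e2, Real.mul_rpow hc0.le hu1, Real.mul_rpow hc0.le hu0]
    have e3 : c ^ (-α) * c ^ (α - 1) = c⁻¹ := by
      rw [← Real.rpow_add hc0, ← Real.rpow_neg_one c]
      ring_nf
    calc c ^ (-α) * (1 - u) ^ (-α) * (c ^ (α - 1) * u ^ (α - 1))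
        = (c ^ (-α) * c ^ (α - 1)) * ((1 - u) ^ (-α) * u ^ (α - 1)) := by ring
      _ = c⁻¹ * (u ^ (α - 1) * (1 - u) ^ (-α)) := by rw [e3]; ring
  rw [congr1, intervalIntegral.integral_const_mul, real_beta hα, smul_eq_mul] at key
  have := key.symm
  field_simp at this ⊢
  rw [← hc, mul_div_assoc, div_self hc0.ne', mul_one] at this
  linarith [this]

lemma semigroup_aux {a s α : ℝ} (hα : α ∈ Set.Ioo (0:ℝ) 1) (has : a < s)
    (M : ℝ → ℝ) (hM : Continuous M) :
    (∫ τ in a..s, (s - τ) ^ (-α) * ∫ σ in a..τ, (τ - σ) ^ (α - 1) * M σ)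
      = Real.Gamma α * Real.Gamma (1 - α) * ∫ σ in a..s, M σ := by
  obtain ⟨h0, h1⟩ := hα
  set μ := volume.restrict (Set.Ioc a s) with hμ
  set F : ℝ → ℝ → ℝ := fun τ σ =>
    if σ ≤ τ then (s - τ) ^ (-α) * ((τ - σ) ^ (α - 1) * M σ) else 0 with hF
  have hFmeas : Measurable (Function.uncurry F) := by
    have : Function.uncurry F = fun p : ℝ × ℝ =>
        if p.2 ≤ p.1 then (s - p.1) ^ (-α) * ((p.1 - p.2) ^ (α - 1) * M p.2) else 0 := rfl
    rw [this]
    exact Measurable.ite (measurableSet_le measurable_snd measurable_fst)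
      (((measurable_const.sub measurable_fst).pow measurable_const).mul
        (((measurable_fst.sub measurable_snd).pow measurable_const).mul
          (hM.measurable.comp measurable_snd)))
      measurable_const
  have hII : ∀ τ : ℝ, IntervalIntegrable (fun σ => (τ - σ) ^ (α - 1) * M σ) volume a s := by
    intro τ
    have h1' : IntervalIntegrable (fun x : ℝ => x ^ (α - 1)) volume (τ - s) (τ - a) :=
      intervalIntegral.intervalIntegrable_rpow' (by linarith)
    have h2 := h1'.comp_sub_left τ
    simp only [sub_sub_cancel] at h2
    exact h2.symm.mul_continuousOn hM.continuousOn
  have hIIK : ∀ τ K' : ℝ, IntervalIntegrable (fun σ => (τ - σ) ^ (α - 1) * K') volume a s := by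
    intro τ K'
    have h1' : IntervalIntegrable (fun x : ℝ => x ^ (α - 1)) volume (τ - s) (τ - a) :=
      intervalIntegral.intervalIntegrable_rpow' (by linarith)
    have h2 := h1'.comp_sub_left τ
    simp only [sub_sub_cancel] at h2
    exact h2.symm.mul_continuousOn continuousOn_const
  have hval : ∀ τ : ℝ, a ≤ τ → (∫ σ in a..τ, (τ - σ) ^ (α - 1)) = (τ - a) ^ α / α := by
    intro τ hτ
    rw [intervalIntegral.integral_comp_sub_left (fun x => x ^ (α - 1)) τ, sub_self]
    rw [integral_rpow (Or.inl (by linarith))]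
    rw [Real.zero_rpow (by linarith : α - 1 + 1 ≠ 0)]
    norm_num
  have hFσ : ∀ τ ∈ Set.Ioc a s, ∀ σ ∈ Set.Ioc a s,
      F τ σ = (Set.Ioc a τ).indicator
        (fun σ => (s - τ) ^ (-α) * ((τ - σ) ^ (α - 1) * M σ)) σ := by
    intro τ hτ σ hσ
    by_cases h : σ ≤ τ
    · rw [hF]; simp only [if_pos h]
      rw [Set.indicator_of_mem (show σ ∈ Set.Ioc a τ from ⟨hσ.1, h⟩)]
    · rw [hF]; simp only [if_neg h]
      rw [Set.indicator_of_notMem (fun hmem => h hmem.2)]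
  -- Step A: inner integral identification
  have hinner : ∀ τ ∈ Set.Ioc a s,
      (∫ σ, F τ σ ∂μ) = (s - τ) ^ (-α) * ∫ σ in a..τ, (τ - σ) ^ (α - 1) * M σ := by
    intro τ hτ
    rw [hμ]
    rw [setIntegral_congr_fun measurableSet_Ioc (hFσ τ hτ)]
    rw [setIntegral_indicator measurableSet_Ioc]
    have he : Set.Ioc a s ∩ Set.Ioc a τ = Set.Ioc a τ :=
      Set.inter_eq_right.mpr (Set.Ioc_subset_Ioc le_rfl hτ.2)
    rw [he, ← intervalIntegral.integral_const_mul,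
      intervalIntegral.integral_of_le hτ.1.le]
  -- integrability of each slice
  have hFint : ∀ τ ∈ Set.Ioc a s, Integrable (F τ) μ := by
    intro τ hτ
    have hbase : IntegrableOn
        (fun σ => (s - τ) ^ (-α) * ((τ - σ) ^ (α - 1) * M σ)) (Set.Ioc a s) volume := by
      have := ((hII τ).const_mul ((s - τ) ^ (-α))).1
      simpa using this
    have hind : Integrable ((Set.Ioc a τ).indicator
        (fun σ => (s - τ) ^ (-α) * ((τ - σ) ^ (α - 1) * M σ))) μ :=
      Integrable.indicator hbase measurableSet_Ioc
    exact hind.congr (by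
      filter_upwards [ae_restrict_mem measurableSet_Ioc] with σ hσ
      exact (hFσ τ hτ σ hσ).symm)
  obtain ⟨K, hK⟩ := (isCompact_Icc (a := a) (b := s)).exists_bound_of_continuousOn
    hM.continuousOn
  have hK0 : 0 ≤ K := le_trans (norm_nonneg (M a)) (hK a ⟨le_rfl, has.le⟩)
  have hprod : Integrable (Function.uncurry F) (μ.prod μ) := by
    rw [MeasureTheory.integrable_prod_iff hFmeas.aestronglyMeasurable]
    constructor
    · filter_upwards [ae_restrict_mem measurableSet_Ioc] with τ hτ
      exact hFint τ hτ
    · apply MeasureTheory.Integrable.mono'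
        (g := fun τ => K * (s - a) ^ α / α * (s - τ) ^ (-α))
      · have hsi : IntervalIntegrable (fun τ : ℝ => (s - τ) ^ (-α)) volume a s := by
          have h1' : IntervalIntegrable (fun x : ℝ => x ^ (-α)) volume (s - s) (s - a) :=
            intervalIntegral.intervalIntegrable_rpow' (by linarith)
          have h2 := h1'.comp_sub_left s
          simp only [sub_sub_cancel] at h2
          exact h2.symm
        have := (hsi.const_mul (K * (s - a) ^ α / α)).1
        have h' : IntegrableOn (fun τ => K * (s - a) ^ α / α * (s - τ) ^ (-α)) (Ioc a s) volume := by
          simpa using this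
        rw [hμ]; exact h'.integrable
      · exact hFmeas.norm.aestronglyMeasurable.integral_prod_right'
      · filter_upwards [ae_restrict_mem measurableSet_Ioc] with τ hτ
        show ‖∫ σ, ‖F τ σ‖ ∂μ‖ ≤ K * (s - a) ^ α / α * (s - τ) ^ (-α)
        have hnn : 0 ≤ ∫ σ, ‖F τ σ‖ ∂μ := integral_nonneg fun σ => norm_nonneg _
        rw [Real.norm_of_nonneg hnn]
        have hsτ : (0:ℝ) ≤ (s - τ) ^ (-α) := Real.rpow_nonneg (by linarith [hτ.2]) _
        set B : ℝ → ℝ := (Set.Ioc a τ).indicator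
          (fun σ => (s - τ) ^ (-α) * ((τ - σ) ^ (α - 1) * K)) with hB
        have hBint : Integrable B μ := by
          have hbase : IntegrableOn
              (fun σ => (s - τ) ^ (-α) * ((τ - σ) ^ (α - 1) * K)) (Set.Ioc a s) volume := by
            have := ((hIIK τ K).const_mul ((s - τ) ^ (-α))).1
            simpa using this
          exact Integrable.indicator (μ := μ) hbase measurableSet_Ioc
        have hmono : (∫ σ, ‖F τ σ‖ ∂μ) ≤ ∫ σ, B σ ∂μ := by
          rw [hμ]
          apply setIntegral_mono_on ((hFint τ hτ).norm) hBint measurableSet_Ioc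
          intro σ hσ
          rw [hFσ τ hτ σ hσ, hB]
          by_cases h : σ ∈ Set.Ioc a τ
          · rw [Set.indicator_of_mem h, Set.indicator_of_mem h]
            have hs2 : (0:ℝ) ≤ (τ - σ) ^ (α - 1) := Real.rpow_nonneg (by linarith [h.2]) _
            rw [norm_mul, norm_mul, Real.norm_of_nonneg hsτ,
              Real.norm_of_nonneg hs2]
            exact mul_le_mul_of_nonneg_left
              (mul_le_mul_of_nonneg_left (hK σ ⟨hσ.1.le, hσ.2⟩) hs2) hsτ
          · rw [Set.indicator_of_notMem h, Set.indicator_of_notMem h]; simp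
        have hBval : (∫ σ, B σ ∂μ) ≤ K * (s - a) ^ α / α * (s - τ) ^ (-α) := by
          rw [hμ, hB, setIntegral_indicator measurableSet_Ioc]
          have he : Set.Ioc a s ∩ Set.Ioc a τ = Set.Ioc a τ :=
            Set.inter_eq_right.mpr (Set.Ioc_subset_Ioc le_rfl hτ.2)
          rw [he, ← intervalIntegral.integral_of_le hτ.1.le,
            intervalIntegral.integral_const_mul]
          have hinner2 : (∫ σ in a..τ, (τ - σ) ^ (α - 1) * K)
              = (τ - a) ^ α / α * K := by
            rw [intervalIntegral.integral_mul_const, hval τ hτ.1.le]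
          rw [hinner2]
          have hmm : (τ - a) ^ α ≤ (s - a) ^ α :=
            Real.rpow_le_rpow (by linarith [hτ.1]) (by linarith [hτ.2]) h0.le
          have hpos : (0:ℝ) < α := h0
          calc (s - τ) ^ (-α) * ((τ - a) ^ α / α * K)
              ≤ (s - τ) ^ (-α) * ((s - a) ^ α / α * K) := by
                apply mul_le_mul_of_nonneg_left _ hsτ
                apply mul_le_mul_of_nonneg_right _ hK0
                exact div_le_div_of_nonneg_right hmm h0.le
            _ = K * (s - a) ^ α / α * (s - τ) ^ (-α) := by ring
        linarith
  have hswap := MeasureTheory.integral_integral_swap (f := F) hprod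
  -- Step D: outer integral after swapping
  have houter : ∀ σ ∈ Set.Ioo a s,
      (∫ τ, F τ σ ∂μ) = Real.Gamma α * Real.Gamma (1 - α) * M σ := by
    intro σ hσ
    have hFτ : ∀ τ ∈ Set.Ioc a s,
        F τ σ = (Set.Ioc σ s).indicator
          (fun τ => (s - τ) ^ (-α) * ((τ - σ) ^ (α - 1) * M σ)) τ := by
      intro τ hτ
      by_cases h : σ < τ
      · rw [hF]; simp only [if_pos h.le]
        rw [Set.indicator_of_mem (show τ ∈ Set.Ioc σ s from ⟨h, hτ.2⟩)]
      · rw [Set.indicator_of_notMem (fun hmem => h hmem.1), hF]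
        by_cases h' : σ ≤ τ
        · have hts : τ = σ := le_antisymm (not_lt.mp h) h'
          simp only [if_pos h', hts, sub_self]
          rw [Real.zero_rpow (by linarith : α - 1 ≠ 0)]
          simp
        · simp only [if_neg h']
    rw [hμ, setIntegral_congr_fun measurableSet_Ioc hFτ,
      setIntegral_indicator measurableSet_Ioc]
    have he : Set.Ioc a s ∩ Set.Ioc σ s = Set.Ioc σ s :=
      Set.inter_eq_right.mpr (Set.Ioc_subset_Ioc hσ.1.le le_rfl)
    rw [he, ← intervalIntegral.integral_of_le hσ.2.le]
    have hpull : (∫ τ in σ..s, (s - τ) ^ (-α) * ((τ - σ) ^ (α - 1) * M σ))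
        = M σ * ∫ τ in σ..s, (s - τ) ^ (-α) * (τ - σ) ^ (α - 1) := by
      rw [← intervalIntegral.integral_const_mul]
      apply intervalIntegral.integral_congr
      intro x _; ring
    rw [hpull, beta_sub ⟨h0, h1⟩ hσ.2]
    ring
  -- assemble
  have hne : ∀ᵐ σ ∂μ, σ ≠ s := by
    rw [ae_iff]
    have : {σ : ℝ | ¬ σ ≠ s} = {s} := by ext x; simp
    rw [this, hμ, Measure.restrict_apply (measurableSet_singleton s)]
    exact measure_mono_null Set.inter_subset_left (Real.volume_singleton)
  calc (∫ τ in a..s, (s - τ) ^ (-α) * ∫ σ in a..τ, (τ - σ) ^ (α - 1) * M σ)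
      = ∫ τ, (∫ σ, F τ σ ∂μ) ∂μ := by
        rw [intervalIntegral.integral_of_le has.le, ← hμ]
        apply MeasureTheory.integral_congr_ae
        filter_upwards [ae_restrict_mem measurableSet_Ioc] with τ hτ
        exact (hinner τ hτ).symm
    _ = ∫ σ, (∫ τ, F τ σ ∂μ) ∂μ := hswap
    _ = ∫ σ, Real.Gamma α * Real.Gamma (1 - α) * M σ ∂μ := by
        apply MeasureTheory.integral_congr_ae
        filter_upwards [ae_restrict_mem measurableSet_Ioc, hne] with σ hσ hσs
        exact houter σ ⟨hσ.1, lt_of_le_of_ne hσ.2 hσs⟩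
    _ = Real.Gamma α * Real.Gamma (1 - α) * ∫ σ in a..s, M σ := by
        rw [MeasureTheory.integral_const_mul, hμ, intervalIntegral.integral_of_le has.le]

/-- The left Riemann–Liouville fractional derivative is a left inverse of the left
Riemann–Liouville fractional integral of the same order `α ∈ (0,1)`:
for continuous `m` on `[a,b]` and every `t ∈ (a,b)`, `(D_{a+}^α (I_{a+}^α m))(t) = m(t)`. -/
theorem RL_derivative_left_inverse_of_integral (a b α : ℝ) (hab : a < b)
    (hα : α ∈ Set.Ioo (0 : ℝ) 1) (m : ℝ → ℝ) (hm : ContinuousOn m (Set.Icc a b)) :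
    ∀ t ∈ Set.Ioo a b, RLDl a α (RLIl a α m) t = m t := by
  obtain ⟨h0, h1⟩ := hα
  intro t ht
  set M : ℝ → ℝ := fun x => m (max a (min x b)) with hMdef
  have hMc : Continuous M :=
    hm.comp_continuous (continuous_const.max (continuous_id.min continuous_const))
      (fun x => ⟨le_max_left _ _, max_le hab.le (min_le_right _ _)⟩)
  have hMeq : ∀ x ∈ Set.Icc a b, M x = m x := by
    intro x hx
    rw [hMdef]
    simp only
    rw [min_eq_left hx.2, max_eq_right hx.1]
  have hG1 : Real.Gamma α ≠ 0 := (Real.Gamma_pos_of_pos h0).ne'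
  have hG2 : Real.Gamma (1 - α) ≠ 0 := (Real.Gamma_pos_of_pos (by linarith)).ne'
  have key : ∀ s ∈ Set.Ioo a b, RLIl a (1 - α) (RLIl a α m) s = ∫ x in a..s, M x := by
    intro s hs
    have hcongr : (∫ τ in a..s, (s - τ) ^ (1 - α - 1) * RLIl a α m τ)
        = ∫ τ in a..s, (1 / Real.Gamma α) *
            ((s - τ) ^ (-α) * ∫ σ in a..τ, (τ - σ) ^ (α - 1) * M σ) := by
      apply intervalIntegral.integral_congr
      intro τ hτ
      rw [Set.uIcc_of_le hs.1.le] at hτ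
      have he : (1 - α - 1 : ℝ) = -α := by ring
      have hm_eq : RLIl a α m τ = RLIl a α M τ := by
        unfold RLIl
        congr 1
        apply intervalIntegral.integral_congr
        intro x hx
        rw [Set.uIcc_of_le hτ.1] at hx
        exact congrArg (fun y => (τ - x) ^ (α - 1) * y) (hMeq x ⟨hx.1, le_trans hx.2 (le_trans hτ.2 hs.2.le)⟩).symm
      show (s - τ) ^ (1 - α - 1) * RLIl a α m τ = _
      rw [he, hm_eq]
      unfold RLIl
      ring
    show (1 / Real.Gamma (1 - α)) *
        (∫ τ in a..s, (s - τ) ^ (1 - α - 1) * RLIl a α m τ) = _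
    rw [hcongr, intervalIntegral.integral_const_mul,
      semigroup_aux ⟨h0, h1⟩ hs.1 M hMc]
    field_simp
  have hev : RLIl a (1 - α) (RLIl a α m) =ᶠ[nhds t] fun s => ∫ x in a..s, M x := by
    filter_upwards [Ioo_mem_nhds ht.1 ht.2] with s hs using key s hs
  have hd : HasDerivAt (fun s => ∫ x in a..s, M x) (M t) t :=
    intervalIntegral.integral_hasDerivAt_right (hMc.intervalIntegrable a t)
      (hMc.stronglyMeasurable.stronglyMeasurableAtFilter) hMc.continuousAt
  rw [RLDl, hev.deriv_eq, hd.deriv]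
  exact hMeq t ⟨ht.1.le, ht.2.le⟩
end

section
/- (Fundamental lemma of the stochastic calculus of variations.) Let a < b, let (Ω,F,P) be a probability space, and let Y : [a,b] × Ω → ℝ be a jointly measurable second-order stochastic process with continuous sample paths such that (t,ω) ↦ Y(t,ω) is integrable on [a,b] × Ω. If E[∫_a^b Y(t)·η(t) dt] = 0 for every jointly measurable second-order stochastic process η : [a,b] × Ω → ℝ with continuous sample paths for which the product is integrable, then Y(t) = 0 almost surely for every t ∈ [a,b]. -/
open MeasureTheory Set intervalIntegral

/-- Fundamental lemma of the stochastic calculus of variations: if `Y` is a jointly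
measurable second-order stochastic process on `[a,b]` with continuous sample paths,
integrable on `[a,b] × Ω`, and `E[∫_a^b Y(t)·η(t) dt] = 0` for every jointly measurable
second-order process `η` with continuous sample paths (for which the product is
integrable), then `Y(t) = 0` almost surely for every `t ∈ [a,b]`. -/
theorem fundamental_lemma_stochastic_calculus_of_variations
    {Ω : Type*} [MeasurableSpace Ω] (P : Measure Ω) [IsProbabilityMeasure P]
    (a b : ℝ) (hab : a < b) (Y : ℝ → Ω → ℝ)
    (hYmeas : Measurable (Function.uncurry Y))
    (hY2 : ∀ t ∈ Set.Icc a b, MemLp (Y t) 2 P)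
    (hYcont : ∀ ω, ContinuousOn (fun t => Y t ω) (Set.Icc a b))
    (hYint : Integrable (fun p : ℝ × Ω => Y p.1 p.2)
      ((volume.restrict (Set.Icc a b)).prod P))
    (h : ∀ η : ℝ → Ω → ℝ, Measurable (Function.uncurry η) →
      (∀ t ∈ Set.Icc a b, MemLp (η t) 2 P) →
      (∀ ω, ContinuousOn (fun t => η t ω) (Set.Icc a b)) →
      Integrable (fun p : ℝ × Ω => Y p.1 p.2 * η p.1 p.2)
        ((volume.restrict (Set.Icc a b)).prod P) →
      ∫ ω, (∫ t in a..b, Y t ω * η t ω) ∂P = 0) :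
    ∀ t ∈ Set.Icc a b, ∀ᵐ ω ∂P, Y t ω = 0 := by
  -- The truncation η = max (-1) (min 1 (Y s ω))
  set η : ℝ → Ω → ℝ := fun s ω => max (-1) (min 1 (Y s ω)) with hηdef
  have hηmeas : Measurable (Function.uncurry η) :=
    measurable_const.max (measurable_const.min hYmeas)
  have hηbd : ∀ s ω, |η s ω| ≤ 1 := by
    intro s ω
    rw [abs_le]
    constructor
    · exact le_max_left _ _
    · exact max_le (by norm_num) (min_le_left _ _)
  have hη2 : ∀ s ∈ Set.Icc a b, MemLp (η s) 2 P := by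
    intro s _
    have hm : Measurable (η s) :=
      (hηmeas.comp (measurable_const.prodMk measurable_id))
    exact MemLp.of_bound hm.aestronglyMeasurable 1
      (Filter.Eventually.of_forall fun ω => by
        simpa [Real.norm_eq_abs] using hηbd s ω)
  have hηcont : ∀ ω, ContinuousOn (fun s => η s ω) (Set.Icc a b) := by
    intro ω
    have hout : Continuous (fun y : ℝ => max (-1) (min 1 y)) :=
      continuous_const.max (continuous_const.min continuous_id)
    exact hout.comp_continuousOn (hYcont ω)
  have hfmeas : Measurable (fun p : ℝ × Ω => Y p.1 p.2 * η p.1 p.2) :=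
    hYmeas.mul (measurable_const.max (measurable_const.min hYmeas))
  have hprodint : Integrable (fun p : ℝ × Ω => Y p.1 p.2 * η p.1 p.2)
      ((volume.restrict (Set.Icc a b)).prod P) := by
    refine hYint.mono hfmeas.aestronglyMeasurable
      (Filter.Eventually.of_forall fun p => ?_)
    rw [Real.norm_eq_abs, Real.norm_eq_abs, abs_mul]
    calc |Y p.1 p.2| * |η p.1 p.2| ≤ |Y p.1 p.2| * 1 :=
          mul_le_mul_of_nonneg_left (hηbd p.1 p.2) (abs_nonneg _)
      _ = |Y p.1 p.2| := mul_one _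
  have hzero := h η hηmeas hη2 hηcont hprodint
  -- nonnegativity of Y * η
  have hnonneg : ∀ s ω, 0 ≤ Y s ω * η s ω := by
    intro s ω
    rcases le_total 0 (Y s ω) with hy | hy
    · refine mul_nonneg hy (le_trans ?_ (le_max_right _ _))
      exact le_min one_pos.le hy
    · have hηle : η s ω ≤ 0 :=
        max_le (by norm_num) (le_trans (min_le_right _ _) hy)
      nlinarith
  -- positivity implication : Y * η = 0 → Y = 0
  have hzero_imp : ∀ s ω, Y s ω * η s ω = 0 → Y s ω = 0 := by
    intro s ω hprod
    by_contra hne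
    rcases lt_or_gt_of_ne hne with hy | hy
    · have h1 : η s ω < 0 := by
        apply max_lt (by norm_num)
        exact lt_of_le_of_lt (min_le_right _ _) hy
      nlinarith
    · have h1 : 0 < η s ω := by
        refine lt_of_lt_of_le ?_ (le_max_right _ _)
        exact lt_min one_pos hy
      nlinarith
  -- Fubini : double integral equals product integral
  have hinner : ∀ ω, ∫ s in Set.Icc a b, Y s ω * η s ω
      = ∫ s in a..b, Y s ω * η s ω := by
    intro ω
    rw [intervalIntegral.integral_of_le hab.le,
      MeasureTheory.integral_Icc_eq_integral_Ioc]
  have hprodzero : ∫ p : ℝ × Ω, Y p.1 p.2 * η p.1 p.2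
      ∂((volume.restrict (Set.Icc a b)).prod P) = 0 := by
    rw [MeasureTheory.integral_prod_symm _ hprodint]
    simp_rw [hinner]
    exact hzero
  have haezero : ∀ᵐ p : ℝ × Ω ∂((volume.restrict (Set.Icc a b)).prod P),
      Y p.1 p.2 * η p.1 p.2 = 0 := by
    have := (MeasureTheory.integral_eq_zero_iff_of_nonneg
      (fun p : ℝ × Ω => hnonneg p.1 p.2) hprodint).mp hprodzero
    filter_upwards [this] with p hp using hp
  have haeY : ∀ᵐ p : ℝ × Ω ∂((volume.restrict (Set.Icc a b)).prod P),
      Y p.1 p.2 = 0 := by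
    filter_upwards [haezero] with p hp using hzero_imp p.1 p.2 hp
  have haeae : ∀ᵐ s ∂(volume.restrict (Set.Icc a b)), ∀ᵐ ω ∂P, Y s ω = 0 :=
    MeasureTheory.Measure.ae_ae_of_ae_prod haeY
  -- the set of good times
  set S : Set ℝ := {s : ℝ | ∀ᵐ ω ∂P, Y s ω = 0} with hSdef
  have hnull : (volume.restrict (Set.Icc a b)) Sᶜ = 0 := by
    exact ae_iff.mp haeae
  -- now fix t and approximate by good times
  intro t ht
  have hexists : ∀ n : ℕ, ∃ s : ℝ, s ∈ Set.Icc a b ∧ s ∈ S ∧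
      |s - t| ≤ 1 / (n + 1 : ℝ) := by
    intro n
    set ε : ℝ := 1 / (n + 1 : ℝ) with hε
    have hεpos : 0 < ε := by positivity
    set c : ℝ := max a (t - ε) with hc
    set d : ℝ := min b (t + ε) with hd
    have hcd : c < d := by
      apply max_lt
      · exact lt_min hab (by linarith [ht.1])
      · exact lt_min (by linarith [ht.2]) (by linarith)
    have hsubIcc : Set.Ioo c d ⊆ Set.Icc a b := fun x hx =>
      ⟨le_trans (le_max_left _ _) hx.1.le, le_trans hx.2.le (min_le_left _ _)⟩
    by_contra hcon
    push_neg at hcon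
    have hsubSc : Set.Ioo c d ⊆ Sᶜ := by
      intro x hx hxS
      exact absurd (hcon x (hsubIcc hx) hxS)
        (not_lt.mpr (abs_sub_le_iff.mpr
          ⟨by linarith [hx.2.le, min_le_right b (t + ε)],
           by linarith [hx.1.le, le_max_right a (t - ε)]⟩))
    have h0 : (volume.restrict (Set.Icc a b)) (Set.Ioo c d) = 0 :=
      measure_mono_null hsubSc hnull
    rw [Measure.restrict_apply measurableSet_Ioo,
      Set.inter_eq_left.mpr hsubIcc, Real.volume_Ioo] at h0
    have : (0 : ℝ) < d - c := by linarith
    simp [ENNReal.ofReal_eq_zero, not_le.mpr this] at h0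
  choose u hu1 hu2 hu3 using hexists
  have hulim : Filter.Tendsto u Filter.atTop (nhds t) := by
    rw [tendsto_iff_dist_tendsto_zero]
    apply squeeze_zero (fun n => dist_nonneg) (fun n => ?_)
      tendsto_one_div_add_atTop_nhds_zero_nat
    rw [Real.dist_eq]
    exact hu3 n
  have haeall : ∀ᵐ ω ∂P, ∀ n : ℕ, Y (u n) ω = 0 :=
    MeasureTheory.ae_all_iff.mpr fun n => hu2 n
  filter_upwards [haeall] with ω hω
  have hcw : ContinuousWithinAt (fun s => Y s ω) (Set.Icc a b) t :=
    hYcont ω t ht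
  have htend : Filter.Tendsto (fun n => Y (u n) ω) Filter.atTop
      (nhds (Y t ω)) := by
    apply hcw.tendsto.comp
    exact tendsto_nhdsWithin_of_tendsto_nhds_of_eventually_within u hulim
      (Filter.Eventually.of_forall hu1)
  have htend0 : Filter.Tendsto (fun n => Y (u n) ω) Filter.atTop
      (nhds 0) := by
    simp_rw [hω]
    exact tendsto_const_nhds
  exact tendsto_nhds_unique htend htend0
end
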